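/- arXiv:1603.04788 — 7 statements merged into one kernel-verified Lean document; each statement's English description precedes it below -/
import Mathlib

section
/- The set function φ_{𝒫'} on subsets of 𝒫 is submodular: for all 𝒮₁, 𝒮₂ ⊆ 𝒫, φ_{𝒫'}(𝒮₁ ∪ 𝒮₂) ≤ φ_{𝒫'}(𝒮₁) + φ_{𝒫'}(𝒮₂) − φ_{𝒫'}(𝒮₁ ∩ 𝒮₂). -/
open Finset symmDiff

variable {V : Type*}

/-- `𝒜` is a partition of the finite set `V`: parts are nonempty, pairwise disjoint,
and their union is all of `V`. -/
def IsPartition [DecidableEq V] [Fintype V] (𝒜 : Finset (Finset V)) : Prop :=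
  (∀ P ∈ 𝒜, P.Nonempty) ∧
  (∀ P ∈ 𝒜, ∀ Q ∈ 𝒜, P ≠ Q → Disjoint P Q) ∧
  𝒜.biUnion id = Finset.univ

/-- `φ(𝒮, 𝒮') = |U_𝒮 △ U_𝒮'|`. -/
def phi [DecidableEq V] (𝒮 𝒮' : Finset (Finset V)) : ℕ :=
  ((𝒮.biUnion id) ∆ (𝒮'.biUnion id)).card

/-- `φ_{𝒫'}(𝒮) = min_{𝒮' ⊆ 𝒫'} φ(𝒮, 𝒮')` (here `ℬ` plays the role of `𝒫'`). -/
def phiMin [DecidableEq V] (ℬ : Finset (Finset V)) (𝒮 : Finset (Finset V)) : ℕ :=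
  ℬ.powerset.inf' (Finset.powerset_nonempty ℬ) (fun 𝒮' => phi 𝒮 𝒮')

lemma card_symmDiff_key [DecidableEq V] [Fintype V] (A B C D : Finset V) :
    ((A ∪ B) ∆ (C ∪ D)).card + ((A ∩ B) ∆ (C ∩ D)).card ≤
      (A ∆ C).card + (B ∆ D).card := by
  have hcard : ∀ s : Finset V, s.card = ∑ v : V, if v ∈ s then 1 else 0 := by
    intro s
    rw [Finset.card_eq_sum_ones]
    rw [Finset.sum_ite_mem]
    simp
  rw [hcard, hcard, hcard, hcard, ← Finset.sum_add_distrib, ← Finset.sum_add_distrib]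
  apply Finset.sum_le_sum
  intro v _
  by_cases ha : v ∈ A <;> by_cases hb : v ∈ B <;> by_cases hc : v ∈ C <;>
    by_cases hd : v ∈ D <;>
    simp [Finset.mem_symmDiff, Finset.mem_union, Finset.mem_inter, ha, hb, hc, hd]

lemma biUnion_union_eq [DecidableEq V] {α : Type*} [DecidableEq α]
    (s t : Finset α) (f : α → Finset V) :
    (s ∪ t).biUnion f = s.biUnion f ∪ t.biUnion f := by
  ext v
  simp only [Finset.mem_biUnion, Finset.mem_union, or_and_right, exists_or]

lemma biUnion_inter_of_disj [DecidableEq V]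
    {𝒜 : Finset (Finset V)} (hd : ∀ P ∈ 𝒜, ∀ Q ∈ 𝒜, P ≠ Q → Disjoint P Q)
    {𝒮₁ 𝒮₂ : Finset (Finset V)} (h1 : 𝒮₁ ⊆ 𝒜) (h2 : 𝒮₂ ⊆ 𝒜) :
    (𝒮₁ ∩ 𝒮₂).biUnion id = 𝒮₁.biUnion id ∩ 𝒮₂.biUnion id := by
  ext v
  simp only [Finset.mem_biUnion, Finset.mem_inter, id]
  constructor
  · rintro ⟨P, ⟨hP1, hP2⟩, hv⟩
    exact ⟨⟨P, hP1, hv⟩, ⟨P, hP2, hv⟩⟩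
  · rintro ⟨⟨P, hP, hvP⟩, ⟨Q, hQ, hvQ⟩⟩
    have hPQ : P = Q := by
      by_contra hne
      exact Finset.disjoint_left.1 (hd P (h1 hP) Q (h2 hQ) hne) hvP hvQ
    exact ⟨P, ⟨hP, hPQ ▸ hQ⟩, hvP⟩

/-- `φ_{𝒫'}` is submodular:
`φ_{𝒫'}(𝒮₁ ∪ 𝒮₂) ≤ φ_{𝒫'}(𝒮₁) + φ_{𝒫'}(𝒮₂) − φ_{𝒫'}(𝒮₁ ∩ 𝒮₂)`
(here `𝒜` plays the role of `𝒫` and `ℬ` the role of `𝒫'`). -/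
theorem stmt4 [DecidableEq V] [Fintype V] (𝒜 ℬ : Finset (Finset V))
    (hA : IsPartition 𝒜) (hB : IsPartition ℬ)
    (𝒮₁ 𝒮₂ : Finset (Finset V)) (hS₁ : 𝒮₁ ⊆ 𝒜) (hS₂ : 𝒮₂ ⊆ 𝒜) :
    (phiMin ℬ (𝒮₁ ∪ 𝒮₂) : ℝ) ≤
      (phiMin ℬ 𝒮₁ : ℝ) + (phiMin ℬ 𝒮₂ : ℝ) - (phiMin ℬ (𝒮₁ ∩ 𝒮₂) : ℝ) := by
  obtain ⟨T₁, hT₁mem, hT₁⟩ := Finset.exists_mem_eq_inf' (Finset.powerset_nonempty ℬ)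
    (fun 𝒮' => phi 𝒮₁ 𝒮')
  obtain ⟨T₂, hT₂mem, hT₂⟩ := Finset.exists_mem_eq_inf' (Finset.powerset_nonempty ℬ)
    (fun 𝒮' => phi 𝒮₂ 𝒮')
  rw [Finset.mem_powerset] at hT₁mem hT₂mem
  have hu : phiMin ℬ (𝒮₁ ∪ 𝒮₂) ≤ phi (𝒮₁ ∪ 𝒮₂) (T₁ ∪ T₂) :=
    Finset.inf'_le _ (Finset.mem_powerset.2 (Finset.union_subset hT₁mem hT₂mem))
  have hi : phiMin ℬ (𝒮₁ ∩ 𝒮₂) ≤ phi (𝒮₁ ∩ 𝒮₂) (T₁ ∩ T₂) :=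
    Finset.inf'_le _ (Finset.mem_powerset.2
      ((Finset.inter_subset_left).trans hT₁mem))
  have key : phi (𝒮₁ ∪ 𝒮₂) (T₁ ∪ T₂) + phi (𝒮₁ ∩ 𝒮₂) (T₁ ∩ T₂) ≤
      phi 𝒮₁ T₁ + phi 𝒮₂ T₂ := by
    unfold phi
    rw [biUnion_union_eq, biUnion_union_eq,
      biUnion_inter_of_disj hA.2.1 hS₁ hS₂, biUnion_inter_of_disj hB.2.1 hT₁mem hT₂mem]
    exact card_symmDiff_key _ _ _ _
  have h1 : phiMin ℬ 𝒮₁ = phi 𝒮₁ T₁ := hT₁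
  have h2 : phiMin ℬ 𝒮₂ = phi 𝒮₂ T₂ := hT₂
  have := le_trans (Nat.add_le_add hu hi) key
  rw [h1, h2]
  have := (Nat.cast_le (α := ℝ)).2 this
  push_cast at this
  linarith
end

section
/- For every fixed part P' ∈ 𝒫', the set function 𝒮 ↦ min{|U_𝒮 ∩ P'|, |P'| − |U_𝒮 ∩ P'|} on subsets of 𝒫 is submodular. -/
open Finset symmDiff

variable {V : Type*}

lemma card_biUnion_inter' [DecidableEq V] [Fintype V] {𝒜 : Finset (Finset V)}
    (hA : IsPartition 𝒜) (P' : Finset V) {S : Finset (Finset V)} (hS : S ⊆ 𝒜) :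
    (S.biUnion id ∩ P').card = ∑ A ∈ S, (A ∩ P').card := by
  rw [show S.biUnion id ∩ P' = S.biUnion (fun A => A ∩ P') by
    ext x; simp [Finset.mem_biUnion]; tauto]
  apply Finset.card_biUnion
  intro A hAm B hBm hne
  exact (hA.2.1 A (hS hAm) B (hS hBm) hne).mono inter_subset_left inter_subset_left

/-- for a fixed part `P' ∈ 𝒫'`, the set function
`𝒮 ↦ min{|U_𝒮 ∩ P'|, |P'| − |U_𝒮 ∩ P'|}` on subsets of `𝒫` is submodular
(here `𝒜` plays the role of `𝒫` and `ℬ` the role of `𝒫'`). -/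
theorem stmt5 [DecidableEq V] [Fintype V] (𝒜 ℬ : Finset (Finset V))
    (hA : IsPartition 𝒜) (hB : IsPartition ℬ)
    (P' : Finset V) (hP' : P' ∈ ℬ)
    (𝒮₁ 𝒮₂ : Finset (Finset V)) (hS₁ : 𝒮₁ ⊆ 𝒜) (hS₂ : 𝒮₂ ⊆ 𝒜) :
    min ((((𝒮₁ ∪ 𝒮₂).biUnion id ∩ P').card : ℝ))
        ((P'.card : ℝ) - (((𝒮₁ ∪ 𝒮₂).biUnion id ∩ P').card : ℝ)) ≤
      min (((𝒮₁.biUnion id ∩ P').card : ℝ))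
          ((P'.card : ℝ) - ((𝒮₁.biUnion id ∩ P').card : ℝ)) +
      min (((𝒮₂.biUnion id ∩ P').card : ℝ))
          ((P'.card : ℝ) - ((𝒮₂.biUnion id ∩ P').card : ℝ)) -
      min ((((𝒮₁ ∩ 𝒮₂).biUnion id ∩ P').card : ℝ))
          ((P'.card : ℝ) - (((𝒮₁ ∩ 𝒮₂).biUnion id ∩ P').card : ℝ)) := by
  have hU : (𝒮₁ ∪ 𝒮₂) ⊆ 𝒜 := Finset.union_subset hS₁ hS₂
  have hI : (𝒮₁ ∩ 𝒮₂) ⊆ 𝒜 := (Finset.inter_subset_left).trans hS₁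
  have h1 := card_biUnion_inter' hA P' hS₁
  have h2 := card_biUnion_inter' hA P' hS₂
  have hu := card_biUnion_inter' hA P' hU
  have hd := card_biUnion_inter' hA P' hI
  set a := (𝒮₁.biUnion id ∩ P').card with ha
  set b := (𝒮₂.biUnion id ∩ P').card with hb
  set u := ((𝒮₁ ∪ 𝒮₂).biUnion id ∩ P').card with huu
  set d := ((𝒮₁ ∩ 𝒮₂).biUnion id ∩ P').card with hdd
  have hmod : u + d = a + b := by
    rw [h1, h2, hu, hd]
    exact Finset.sum_union_inter
  have hda : d ≤ a := by
    rw [h1, hd]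
    exact Finset.sum_le_sum_of_subset Finset.inter_subset_left
  have hdb : d ≤ b := by
    rw [h2, hd]
    exact Finset.sum_le_sum_of_subset Finset.inter_subset_right
  have hau : a ≤ u := by
    rw [h1, hu]
    exact Finset.sum_le_sum_of_subset Finset.subset_union_left
  have hbu : b ≤ u := by
    rw [h2, hu]
    exact Finset.sum_le_sum_of_subset Finset.subset_union_right
  have huc : u ≤ P'.card := Finset.card_le_card Finset.inter_subset_right
  have hmodR : (u : ℝ) + d = a + b := by exact_mod_cast hmod
  have hdaR : (d : ℝ) ≤ a := by exact_mod_cast hda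
  have hdbR : (d : ℝ) ≤ b := by exact_mod_cast hdb
  have hauR : (a : ℝ) ≤ u := by exact_mod_cast hau
  have hbuR : (b : ℝ) ≤ u := by exact_mod_cast hbu
  have hucR : (u : ℝ) ≤ P'.card := by exact_mod_cast huc
  set c : ℝ := (P'.card : ℝ)
  have l1 : min (u : ℝ) (c - u) ≤ u := min_le_left _ _
  have l2 : min (u : ℝ) (c - u) ≤ c - u := min_le_right _ _
  have l3 : min (d : ℝ) (c - d) ≤ d := min_le_left _ _
  have l4 : min (d : ℝ) (c - d) ≤ c - d := min_le_right _ _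
  rcases min_cases (a : ℝ) (c - a) with ⟨e1, _⟩ | ⟨e1, _⟩ <;>
    rcases min_cases (b : ℝ) (c - b) with ⟨e2, _⟩ | ⟨e2, _⟩ <;>
    rw [e1, e2] <;> linarith
end

section
/- Let 𝒮_s, 𝒮_t ⊆ 𝒫 be disjoint, and define b(𝒮_s, 𝒮_t) := Σ_{P' ∈ 𝒫'} min{|U_{𝒮_s} ∩ P'|, |U_{𝒮_t} ∩ P'|}. Then for every 𝒮 ⊆ 𝒫 with 𝒮_s ⊆ 𝒮 and 𝒮 ∩ 𝒮_t = ∅, one has b(𝒮_s, 𝒮_t) ≤ φ_{𝒫'}(𝒮). -/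
open Finset symmDiff

variable {V : Type*}

/-- for disjoint `𝒮_s, 𝒮_t ⊆ 𝒫`, the bound
`b(𝒮_s, 𝒮_t) = Σ_{P' ∈ 𝒫'} min{|U_{𝒮_s} ∩ P'|, |U_{𝒮_t} ∩ P'|}` satisfies
`b(𝒮_s, 𝒮_t) ≤ φ_{𝒫'}(𝒮)` for every `𝒮 ⊆ 𝒫` with `𝒮_s ⊆ 𝒮` and `𝒮 ∩ 𝒮_t = ∅`
(here `𝒜` plays the role of `𝒫` and `ℬ` the role of `𝒫'`). -/
theorem stmt7 [DecidableEq V] [Fintype V] (𝒜 ℬ : Finset (Finset V))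
    (hA : IsPartition 𝒜) (hB : IsPartition ℬ)
    (𝒮s 𝒮t : Finset (Finset V)) (hSs : 𝒮s ⊆ 𝒜) (hSt : 𝒮t ⊆ 𝒜)
    (hdisj : 𝒮s ∩ 𝒮t = ∅)
    (𝒮 : Finset (Finset V)) (hS : 𝒮 ⊆ 𝒜) (hsub : 𝒮s ⊆ 𝒮) (hST : 𝒮 ∩ 𝒮t = ∅) :
    ∑ P' ∈ ℬ, min ((𝒮s.biUnion id ∩ P').card) ((𝒮t.biUnion id ∩ P').card) ≤
      phiMin ℬ 𝒮 := by
  obtain ⟨hA1, hA2, hA3⟩ := hA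
  obtain ⟨hB1, hB2, hB3⟩ := hB
  apply Finset.le_inf'
  intro 𝒮' h𝒮'
  rw [Finset.mem_powerset] at h𝒮'
  set D := (𝒮.biUnion id) ∆ (𝒮'.biUnion id) with hDdef
  -- U_{𝒮t} is disjoint from U_𝒮
  have hUt : Disjoint (𝒮t.biUnion id) (𝒮.biUnion id) := by
    rw [Finset.disjoint_left]
    intro x hxt hxS
    obtain ⟨Pt, hPt, hxPt⟩ := Finset.mem_biUnion.mp hxt
    obtain ⟨P, hP, hxP⟩ := Finset.mem_biUnion.mp hxS
    have hne : Pt ≠ P := by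
      rintro rfl
      have : Pt ∈ 𝒮 ∩ 𝒮t := Finset.mem_inter.mpr ⟨hP, hPt⟩
      simp [hST] at this
    exact Finset.disjoint_left.mp (hA2 Pt (hSt hPt) P (hS hP) hne) hxPt hxP
  have key : ∀ P' ∈ ℬ,
      min ((𝒮s.biUnion id ∩ P').card) ((𝒮t.biUnion id ∩ P').card) ≤ (D ∩ P').card := by
    intro P' hP'
    by_cases hmem : P' ∈ 𝒮'
    · have h1 : 𝒮t.biUnion id ∩ P' ⊆ D ∩ P' := by
        intro x hx
        obtain ⟨hxt, hxP⟩ := Finset.mem_inter.mp hx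
        refine Finset.mem_inter.mpr ⟨?_, hxP⟩
        rw [hDdef, Finset.mem_symmDiff]
        right
        exact ⟨Finset.mem_biUnion.mpr ⟨P', hmem, hxP⟩,
          fun hxS => Finset.disjoint_left.mp hUt hxt hxS⟩
      exact le_trans (min_le_right _ _) (Finset.card_le_card h1)
    · have h1 : 𝒮s.biUnion id ∩ P' ⊆ D ∩ P' := by
        intro x hx
        obtain ⟨hxs, hxP⟩ := Finset.mem_inter.mp hx
        refine Finset.mem_inter.mpr ⟨?_, hxP⟩
        rw [hDdef, Finset.mem_symmDiff]
        left
        refine ⟨Finset.biUnion_subset_biUnion_of_subset_left id hsub hxs, ?_⟩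
        intro hxS'
        obtain ⟨Q, hQ, hxQ⟩ := Finset.mem_biUnion.mp hxS'
        have hne : Q ≠ P' := fun h => hmem (h ▸ hQ)
        exact Finset.disjoint_left.mp (hB2 Q (h𝒮' hQ) P' hP' hne) hxQ hxP
      exact le_trans (min_le_left _ _) (Finset.card_le_card h1)
  calc ∑ P' ∈ ℬ, min ((𝒮s.biUnion id ∩ P').card) ((𝒮t.biUnion id ∩ P').card)
      ≤ ∑ P' ∈ ℬ, (D ∩ P').card := Finset.sum_le_sum key
    _ = (ℬ.biUnion (fun P' => D ∩ P')).card := by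
        rw [Finset.card_biUnion]
        intro P hP Q hQ hne
        exact (hB2 P hP Q hQ hne).mono (Finset.inter_subset_right)
          (Finset.inter_subset_right)
    _ = D.card := by
        congr 1
        ext x
        simp only [Finset.mem_biUnion, Finset.mem_inter]
        constructor
        · rintro ⟨P, _, hxD, _⟩; exact hxD
        · intro hxD
          have : x ∈ ℬ.biUnion id := hB3 ▸ Finset.mem_univ x
          obtain ⟨P, hP, hxP⟩ := Finset.mem_biUnion.mp this
          exact ⟨P, hP, hxD, hxP⟩
    _ = phi 𝒮 𝒮' := rfl
end

section
/- The set function φ* need not be submodular: there exist a finite set V, partitions 𝒫 and 𝒫' of V, and subsets 𝒮₁, 𝒮₂ ⊆ 𝒫 such that φ*(𝒮₁ ∪ 𝒮₂) > φ*(𝒮₁) + φ*(𝒮₂) − φ*(𝒮₁ ∩ 𝒮₂). -/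
open Finset symmDiff

variable {V : Type*}

/-- `φ*(𝒮) = 0` if `𝒮 ∈ {∅, 𝒫}`, and otherwise the minimum of `|U_𝒮 △ U_{𝒮'}|`
over all `𝒮'` with `∅ ≠ 𝒮' ⊊ 𝒫'` (here `𝒜` plays the role of `𝒫` and `ℬ` the
role of `𝒫'`). -/
noncomputable def phiStar [DecidableEq V] (𝒜 ℬ : Finset (Finset V))
    (𝒮 : Finset (Finset V)) : ℕ :=
  if 𝒮 = ∅ ∨ 𝒮 = 𝒜 then 0
  else sInf {n : ℕ | ∃ 𝒮' : Finset (Finset V), 𝒮' ⊆ ℬ ∧ 𝒮' ≠ ∅ ∧ 𝒮' ≠ ℬ ∧ n = phi 𝒮 𝒮'}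

lemma finset_subset_pair {α : Type*} [DecidableEq α] {a b : α} {s : Finset α}
    (h : s ⊆ ({a, b} : Finset α)) :
    s = ∅ ∨ s = {a} ∨ s = {b} ∨ s = ({a, b} : Finset α) := by
  by_cases ha : a ∈ s <;> by_cases hb : b ∈ s
  · right; right; right
    refine subset_antisymm h ?_
    intro x hx
    simp only [Finset.mem_insert, Finset.mem_singleton] at hx
    rcases hx with rfl | rfl <;> assumption
  · right; left
    ext x
    simp only [Finset.mem_singleton]
    constructor
    · intro hx
      have hm := h hx
      simp only [Finset.mem_insert, Finset.mem_singleton] at hm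
      rcases hm with rfl | rfl
      · rfl
      · exact absurd hx hb
    · rintro rfl; exact ha
  · right; right; left
    ext x
    simp only [Finset.mem_singleton]
    constructor
    · intro hx
      have hm := h hx
      simp only [Finset.mem_insert, Finset.mem_singleton] at hm
      rcases hm with rfl | rfl
      · exact absurd hx ha
      · rfl
    · rintro rfl; exact hb
  · left
    ext x
    simp only [Finset.notMem_empty, iff_false]
    intro hx
    have hm := h hx
    simp only [Finset.mem_insert, Finset.mem_singleton] at hm
    rcases hm with rfl | rfl
    · exact ha hx
    · exact hb hx

lemma phiStar_eq_of {V : Type*} [DecidableEq V] (𝒜 ℬ 𝒮 : Finset (Finset V)) (k : ℕ)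
    (hne : ¬ (𝒮 = ∅ ∨ 𝒮 = 𝒜))
    (h1 : ∃ 𝒮', 𝒮' ⊆ ℬ ∧ 𝒮' ≠ ∅ ∧ 𝒮' ≠ ℬ ∧ phi 𝒮 𝒮' = k)
    (h2 : ∀ 𝒮', 𝒮' ⊆ ℬ → 𝒮' ≠ ∅ → 𝒮' ≠ ℬ → k ≤ phi 𝒮 𝒮') :
    phiStar 𝒜 ℬ 𝒮 = k := by
  rw [phiStar, if_neg hne]
  apply le_antisymm
  · obtain ⟨S', hS', h0, hB, hk⟩ := h1
    exact Nat.sInf_le ⟨S', hS', h0, hB, hk.symm⟩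
  · apply le_csInf
    · obtain ⟨S', hS', h0, hB, hk⟩ := h1
      exact ⟨k, S', hS', h0, hB, hk.symm⟩
    · rintro n ⟨S', hsub, h0, hB, rfl⟩
      exact h2 S' hsub h0 hB

/-- `φ*` need not be submodular: there are a finite set `V`
(modelled as `Fin n`), partitions `𝒜, ℬ` of it, and `𝒮₁, 𝒮₂ ⊆ 𝒜` with
`φ*(𝒮₁ ∪ 𝒮₂) > φ*(𝒮₁) + φ*(𝒮₂) − φ*(𝒮₁ ∩ 𝒮₂)`. -/
theorem stmt12 :
    ∃ (n : ℕ) (𝒜 ℬ : Finset (Finset (Fin n))),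
      IsPartition 𝒜 ∧ IsPartition ℬ ∧
      ∃ (𝒮₁ 𝒮₂ : Finset (Finset (Fin n))), 𝒮₁ ⊆ 𝒜 ∧ 𝒮₂ ⊆ 𝒜 ∧
        (phiStar 𝒜 ℬ 𝒮₁ : ℤ) + (phiStar 𝒜 ℬ 𝒮₂ : ℤ) - (phiStar 𝒜 ℬ (𝒮₁ ∩ 𝒮₂) : ℤ)
          < (phiStar 𝒜 ℬ (𝒮₁ ∪ 𝒮₂) : ℤ) := by
  refine ⟨4, {({2,3} : Finset (Fin 4)), {1}, {0}}, {({1,2,3} : Finset (Fin 4)), {0}},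
    ⟨by decide, by decide, by decide⟩,
    ⟨by decide, by decide, by decide⟩,
    {({2,3} : Finset (Fin 4))}, {({0} : Finset (Fin 4))}, by decide, by decide, ?_⟩
  have key : ∀ (𝒮 : Finset (Finset (Fin 4))) (k : ℕ), ¬ (𝒮 = ∅ ∨ 𝒮 = {({2,3} : Finset (Fin 4)), {1}, {0}}) →
      phi 𝒮 {({1,2,3} : Finset (Fin 4))} = k ∨ phi 𝒮 {({0} : Finset (Fin 4))} = k →
      k ≤ phi 𝒮 {({1,2,3} : Finset (Fin 4))} → k ≤ phi 𝒮 {({0} : Finset (Fin 4))} →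
      phiStar {({2,3} : Finset (Fin 4)), {1}, {0}} {({1,2,3} : Finset (Fin 4)), {0}} 𝒮 = k := by
    intro 𝒮 k hne hex hb1 hb2
    apply phiStar_eq_of _ _ _ _ hne
    · rcases hex with h | h
      · exact ⟨{({1,2,3} : Finset (Fin 4))}, by decide, by decide, by decide, h⟩
      · exact ⟨{({0} : Finset (Fin 4))}, by decide, by decide, by decide, h⟩
    · intro S' hsub h0 hB
      rcases finset_subset_pair hsub with rfl | rfl | rfl | rfl
      · exact absurd rfl h0
      · exact hb1
      · exact hb2
      · exact absurd rfl hB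
  have h1 := key {({2,3} : Finset (Fin 4))} 1 (by decide) (Or.inl (by decide))
    (by decide) (by decide)
  have h2 := key {({0} : Finset (Fin 4))} 0 (by decide) (Or.inr (by decide))
    (Nat.zero_le _) (Nat.zero_le _)
  have h4 := key (({({2,3} : Finset (Fin 4))} : Finset (Finset (Fin 4))) ∪ {({0} : Finset (Fin 4))}) 2
    (by decide) (Or.inl (by decide)) (by decide) (by decide)
  have hi : ({({2,3} : Finset (Fin 4))} : Finset (Finset (Fin 4))) ∩ {({0} : Finset (Fin 4))} = ∅ := by decide
  have h3 : phiStar {({2,3} : Finset (Fin 4)), {1}, {0}} {({1,2,3} : Finset (Fin 4)), {0}}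
      (({({2,3} : Finset (Fin 4))} : Finset (Finset (Fin 4))) ∩ {({0} : Finset (Fin 4))}) = 0 := by
    rw [hi, phiStar, if_pos (Or.inl rfl)]
  rw [h1, h2, h3, h4]
  norm_num
end

section
/- Fix distinct parts P_i', P_j' ∈ 𝒫'. For every subset 𝒮 ⊆ 𝒫, the minimum of |U_𝒮 △ U_{𝒮'}| over all 𝒮' ⊆ 𝒫' with P_i' ∈ 𝒮' and P_j' ∉ 𝒮' equals φ*_{i',j'}(𝒮) := |U_𝒮 ∩ P_j'| + |P_i'| − |U_𝒮 ∩ P_i'| + Σ_{P' ∈ 𝒫', P' ∉ {P_i', P_j'}} min{|U_𝒮 ∩ P'|, |P'| − |U_𝒮 ∩ P'|}, and this minimum is attained by 𝒮' := {P_i'} ∪ {P' ∈ 𝒫' \ {P_i', P_j'} : |U_𝒮 ∩ P'| > |P'|/2}. -/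
open Finset symmDiff

variable {V : Type*}

/-- `φ*_{i',j'}(𝒮) = |U_𝒮 ∩ P_j'| + |P_i'| − |U_𝒮 ∩ P_i'|
+ Σ_{P' ∈ 𝒫', P' ∉ {P_i', P_j'}} min{|U_𝒮 ∩ P'|, |P'| − |U_𝒮 ∩ P'|}`
(here `ℬ` plays the role of `𝒫'`). -/
def phiStarIJ [DecidableEq V] (ℬ : Finset (Finset V)) (Pi' Pj' : Finset V)
    (𝒮 : Finset (Finset V)) : ℤ :=
  ((𝒮.biUnion id ∩ Pj').card : ℤ) + (Pi'.card : ℤ) - ((𝒮.biUnion id ∩ Pi').card : ℤ) +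
    ∑ P' ∈ ℬ \ {Pi', Pj'},
      min (((𝒮.biUnion id ∩ P').card : ℤ))
        ((P'.card : ℤ) - ((𝒮.biUnion id ∩ P').card : ℤ))

lemma symmDiff_inter_distrib {α : Type*} [DecidableEq α] (a b c : Finset α) :
    (a ∆ b) ∩ c = (a ∩ c) ∆ (b ∩ c) := by
  ext x; simp [Finset.mem_symmDiff]; tauto

lemma card_eq_sum_inter [DecidableEq V] [Fintype V] {ℬ : Finset (Finset V)}
    (hB : IsPartition ℬ) (T : Finset V) :
    T.card = ∑ P' ∈ ℬ, (T ∩ P').card := by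
  obtain ⟨-, hdisj, huniv⟩ := hB
  have h2 := Finset.biUnion_inter ℬ (id : Finset V → Finset V) T
  rw [huniv, Finset.univ_inter] at h2
  have h1 : T = ℬ.biUnion (fun P' => T ∩ P') :=
    h2.trans (Finset.biUnion_congr rfl fun P _ => Finset.inter_comm (id P) T)
  conv_lhs => rw [h1]
  exact Finset.card_biUnion fun P hP Q hQ hPQ =>
    (hdisj P hP Q hQ hPQ).mono Finset.inter_subset_right Finset.inter_subset_right

lemma biUnion_inter_part [DecidableEq V] {ℬ 𝒮' : Finset (Finset V)}
    (hdisj : ∀ P ∈ ℬ, ∀ Q ∈ ℬ, P ≠ Q → Disjoint P Q) (hsub : 𝒮' ⊆ ℬ)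
    {P' : Finset V} (hP' : P' ∈ ℬ) :
    𝒮'.biUnion id ∩ P' = if P' ∈ 𝒮' then P' else ∅ := by
  split_ifs with h
  · rw [Finset.inter_eq_right]
    exact Finset.subset_biUnion_of_mem id h
  · rw [← Finset.disjoint_iff_inter_eq_empty, Finset.disjoint_biUnion_left]
    intro Q hQ
    exact hdisj Q (hsub hQ) P' hP' (fun he => h (he ▸ hQ))

lemma phi_eq [DecidableEq V] [Fintype V] {ℬ : Finset (Finset V)} (hB : IsPartition ℬ)
    (𝒮 𝒮' : Finset (Finset V)) (hsub : 𝒮' ⊆ ℬ) :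
    (phi 𝒮 𝒮' : ℤ) = ∑ P' ∈ ℬ,
      (if P' ∈ 𝒮' then (P'.card : ℤ) - ((𝒮.biUnion id ∩ P').card : ℤ)
       else ((𝒮.biUnion id ∩ P').card : ℤ)) := by
  rw [phi, card_eq_sum_inter hB]
  push_cast
  refine Finset.sum_congr rfl fun P' hP' => ?_
  rw [symmDiff_inter_distrib, biUnion_inter_part hB.2.1 hsub hP']
  split_ifs with h
  · rw [symmDiff_of_le Finset.inter_subset_right,
      Finset.card_sdiff_of_subset Finset.inter_subset_right,
      Nat.cast_sub (Finset.card_le_card Finset.inter_subset_right)]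
  · simp [symmDiff]

/-- for distinct `P_i', P_j' ∈ 𝒫'` and `𝒮 ⊆ 𝒫`, the minimum of
`|U_𝒮 △ U_{𝒮'}|` over all `𝒮' ⊆ 𝒫'` with `P_i' ∈ 𝒮'` and `P_j' ∉ 𝒮'` equals
`φ*_{i',j'}(𝒮)`, and it is attained by
`𝒮' = {P_i'} ∪ {P' ∈ 𝒫' \ {P_i', P_j'} : |U_𝒮 ∩ P'| > |P'|/2}`
(here `𝒜` plays the role of `𝒫` and `ℬ` the role of `𝒫'`). -/
theorem stmt13 [DecidableEq V] [Fintype V] (𝒜 ℬ : Finset (Finset V))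
    (hA : IsPartition 𝒜) (hB : IsPartition ℬ)
    (Pi' Pj' : Finset V) (hi : Pi' ∈ ℬ) (hj : Pj' ∈ ℬ) (hij : Pi' ≠ Pj')
    (𝒮 : Finset (Finset V)) (hS : 𝒮 ⊆ 𝒜) :
    (∀ 𝒮' ⊆ ℬ, Pi' ∈ 𝒮' → Pj' ∉ 𝒮' →
        phiStarIJ ℬ Pi' Pj' 𝒮 ≤ (phi 𝒮 𝒮' : ℤ)) ∧
    (∃ 𝒮'₀ : Finset (Finset V),
      𝒮'₀ = insert Pi' ((ℬ \ {Pi', Pj'}).filter fun P' =>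
          ((P'.card : ℚ) / 2 < ((𝒮.biUnion id ∩ P').card : ℚ))) ∧
      𝒮'₀ ⊆ ℬ ∧ Pi' ∈ 𝒮'₀ ∧ Pj' ∉ 𝒮'₀ ∧
        (phi 𝒮 𝒮'₀ : ℤ) = phiStarIJ ℬ Pi' Pj' 𝒮) := by
  have key : ∀ 𝒮' ⊆ ℬ, Pi' ∈ 𝒮' → Pj' ∉ 𝒮' →
      (phi 𝒮 𝒮' : ℤ) = ((𝒮.biUnion id ∩ Pj').card : ℤ) + (Pi'.card : ℤ)
          - ((𝒮.biUnion id ∩ Pi').card : ℤ) +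
        ∑ P' ∈ ℬ \ {Pi', Pj'},
          (if P' ∈ 𝒮' then (P'.card : ℤ) - ((𝒮.biUnion id ∩ P').card : ℤ)
           else ((𝒮.biUnion id ∩ P').card : ℤ)) := by
    intro 𝒮' hsub hiS hjS
    rw [phi_eq hB 𝒮 𝒮' hsub]
    have hpair : ({Pi', Pj'} : Finset (Finset V)) ⊆ ℬ := by
      intro x hx; simp only [Finset.mem_insert, Finset.mem_singleton] at hx
      rcases hx with rfl | rfl <;> assumption
    rw [← Finset.sum_sdiff hpair, Finset.sum_pair hij, if_pos hiS, if_neg hjS]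
    ring
  constructor
  · intro 𝒮' hsub hiS hjS
    rw [key 𝒮' hsub hiS hjS, phiStarIJ]
    gcongr with P' hP'
    split_ifs
    · exact min_le_right _ _
    · exact min_le_left _ _
  · set F := (ℬ \ {Pi', Pj'}).filter fun P' =>
        ((P'.card : ℚ) / 2 < ((𝒮.biUnion id ∩ P').card : ℚ)) with hF
    have hsub0 : insert Pi' F ⊆ ℬ := by
      intro x hx
      rcases Finset.mem_insert.1 hx with rfl | hx
      · exact hi
      · exact (Finset.mem_sdiff.1 (Finset.mem_filter.1 hx).1).1
    have hj0 : Pj' ∉ insert Pi' F := by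
      intro hjmem
      rcases Finset.mem_insert.1 hjmem with h | h
      · exact hij h.symm
      · have := (Finset.mem_sdiff.1 (Finset.mem_filter.1 h).1).2
        simp at this
    refine ⟨insert Pi' F, rfl, hsub0, Finset.mem_insert_self _ _, hj0, ?_⟩
    rw [key (insert Pi' F) hsub0 (Finset.mem_insert_self _ _) hj0, phiStarIJ]
    congr 1
    refine Finset.sum_congr rfl fun P' hP' => ?_
    have hne : P' ≠ Pi' := by
      have := (Finset.mem_sdiff.1 hP').2; simp at this; exact this.1
    have hmem : P' ∈ insert Pi' F ↔
        ((P'.card : ℚ) / 2 < ((𝒮.biUnion id ∩ P').card : ℚ)) := by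
      rw [Finset.mem_insert, or_iff_right hne, hF, Finset.mem_filter,
        and_iff_right hP']
    by_cases hcond : ((P'.card : ℚ) / 2 < ((𝒮.biUnion id ∩ P').card : ℚ))
    · rw [if_pos (hmem.2 hcond), min_eq_right]
      have : (P'.card : ℚ) < 2 * ((𝒮.biUnion id ∩ P').card : ℚ) := by linarith
      have h2 : (P'.card : ℤ) < 2 * ((𝒮.biUnion id ∩ P').card : ℤ) := by exact_mod_cast this
      omega
    · rw [if_neg (fun h => hcond (hmem.1 h)), min_eq_left]
      push_neg at hcond
      have : 2 * ((𝒮.biUnion id ∩ P').card : ℚ) ≤ (P'.card : ℚ) := by linarith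
      have h2 : 2 * ((𝒮.biUnion id ∩ P').card : ℤ) ≤ (P'.card : ℤ) := by exact_mod_cast this
      omega
end

section
/- Fix distinct parts P_i', P_j' ∈ 𝒫'. The set function φ*_{i',j'} on subsets of 𝒫 is submodular. -/
open Finset symmDiff

variable {V : Type*}

lemma min_submod (a1 a2 au ai c : ℤ) (h : au + ai = a1 + a2)
    (h1 : ai ≤ a1) (h2 : ai ≤ a2) :
    min au (c - au) + min ai (c - ai) ≤ min a1 (c - a1) + min a2 (c - a2) := by
  omega

/-- for distinct `P_i', P_j' ∈ 𝒫'`, the set function `φ*_{i',j'}`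
on subsets of `𝒫` is submodular (here `𝒜` plays the role of `𝒫` and `ℬ` the
role of `𝒫'`). -/
theorem stmt14 [DecidableEq V] [Fintype V] (𝒜 ℬ : Finset (Finset V))
    (hA : IsPartition 𝒜) (hB : IsPartition ℬ)
    (Pi' Pj' : Finset V) (hi : Pi' ∈ ℬ) (hj : Pj' ∈ ℬ) (hij : Pi' ≠ Pj')
    (𝒮₁ 𝒮₂ : Finset (Finset V)) (hS₁ : 𝒮₁ ⊆ 𝒜) (hS₂ : 𝒮₂ ⊆ 𝒜) :
    phiStarIJ ℬ Pi' Pj' (𝒮₁ ∪ 𝒮₂) ≤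
      phiStarIJ ℬ Pi' Pj' 𝒮₁ + phiStarIJ ℬ Pi' Pj' 𝒮₂ -
        phiStarIJ ℬ Pi' Pj' (𝒮₁ ∩ 𝒮₂) := by
  obtain ⟨-, hdisj, -⟩ := hA
  set U1 := 𝒮₁.biUnion id with hU1
  set U2 := 𝒮₂.biUnion id with hU2
  have hU : (𝒮₁ ∪ 𝒮₂).biUnion id = U1 ∪ U2 := by
    ext x
    simp only [Finset.mem_biUnion, Finset.mem_union, hU1, hU2]
    constructor
    · rintro ⟨P, hP | hP, hx⟩
      · exact Or.inl ⟨P, hP, hx⟩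
      · exact Or.inr ⟨P, hP, hx⟩
    · rintro (⟨P, hP, hx⟩ | ⟨P, hP, hx⟩)
      · exact ⟨P, Or.inl hP, hx⟩
      · exact ⟨P, Or.inr hP, hx⟩
  have hI : (𝒮₁ ∩ 𝒮₂).biUnion id = U1 ∩ U2 := by
    apply Finset.Subset.antisymm
    · intro x hx
      simp only [Finset.mem_biUnion, Finset.mem_inter, id, hU1, hU2] at hx ⊢
      obtain ⟨P, hP, hxP⟩ := hx
      exact ⟨⟨P, hP.1, hxP⟩, ⟨P, hP.2, hxP⟩⟩
    · intro x hx
      simp only [Finset.mem_biUnion, Finset.mem_inter, id, hU1, hU2] at hx ⊢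
      obtain ⟨⟨P1, hP1, hx1⟩, ⟨P2, hP2, hx2⟩⟩ := hx
      have hPe : P1 = P2 := by
        by_contra hne
        exact Finset.disjoint_left.mp (hdisj P1 (hS₁ hP1) P2 (hS₂ hP2) hne) hx1 hx2
      exact ⟨P1, ⟨hP1, hPe ▸ hP2⟩, hx1⟩
  have hmod : ∀ P : Finset V, (((U1 ∪ U2) ∩ P).card : ℤ) + (((U1 ∩ U2) ∩ P).card : ℤ)
      = ((U1 ∩ P).card : ℤ) + ((U2 ∩ P).card : ℤ) := by
    intro P
    rw [Finset.union_inter_distrib_right, Finset.inter_inter_distrib_right]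
    exact_mod_cast Finset.card_union_add_card_inter _ _
  have hm1 : ∀ P : Finset V, (((U1 ∩ U2) ∩ P).card : ℤ) ≤ ((U1 ∩ P).card : ℤ) := by
    intro P
    exact_mod_cast Finset.card_le_card
      (Finset.inter_subset_inter Finset.inter_subset_left (Finset.Subset.refl _))
  have hm2 : ∀ P : Finset V, (((U1 ∩ U2) ∩ P).card : ℤ) ≤ ((U2 ∩ P).card : ℤ) := by
    intro P
    exact_mod_cast Finset.card_le_card
      (Finset.inter_subset_inter Finset.inter_subset_right (Finset.Subset.refl _))
  have hsum : (∑ P' ∈ ℬ \ {Pi', Pj'},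
        min ((((U1 ∪ U2) ∩ P').card : ℤ)) ((P'.card : ℤ) - (((U1 ∪ U2) ∩ P').card : ℤ))) +
      (∑ P' ∈ ℬ \ {Pi', Pj'},
        min ((((U1 ∩ U2) ∩ P').card : ℤ)) ((P'.card : ℤ) - (((U1 ∩ U2) ∩ P').card : ℤ))) ≤
      (∑ P' ∈ ℬ \ {Pi', Pj'},
        min (((U1 ∩ P').card : ℤ)) ((P'.card : ℤ) - ((U1 ∩ P').card : ℤ))) +
      (∑ P' ∈ ℬ \ {Pi', Pj'},
        min (((U2 ∩ P').card : ℤ)) ((P'.card : ℤ) - ((U2 ∩ P').card : ℤ))) := by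
    rw [← Finset.sum_add_distrib, ← Finset.sum_add_distrib]
    refine Finset.sum_le_sum fun P _ => ?_
    exact min_submod _ _ _ _ _ (hmod P) (hm1 P) (hm2 P)
  unfold phiStarIJ
  rw [hU, hI]
  have hj' := hmod Pj'
  have hi' := hmod Pi'
  linarith [hsum, hj', hi']
end

section
/- Let (𝒮, 𝒮') be an optimal C_𝒫-correspondence, i.e. 𝒮 ∉ {∅, 𝒫} and φ(𝒮, 𝒮') ≤ φ(𝒯, 𝒯') for every 𝒯 ⊆ 𝒫 with 𝒯 ∉ {∅, 𝒫} and every 𝒯' ⊆ 𝒫'. If (𝒮, 𝒮') is not mutual, then |𝒮| ∈ {1, |𝒫| − 1} or |𝒮'| ∈ {1, |𝒫'| − 1}. -/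
open Finset symmDiff

variable {V : Type*}

/-- A correspondence `(𝒮, 𝒮')` with `𝒮 ⊆ 𝒫`, `𝒮' ⊆ 𝒫'` is mutual if
(1) `|P ∩ U_{𝒮'}| ≥ |P|/2` for all `P ∈ 𝒮`,
(2) `|P ∩ U_{𝒮'}| ≤ |P|/2` for all `P ∈ 𝒫 \ 𝒮`,
(3) `|P' ∩ U_𝒮| ≥ |P'|/2` for all `P' ∈ 𝒮'`,
(4) `|P' ∩ U_𝒮| ≤ |P'|/2` for all `P' ∈ 𝒫' \ 𝒮'`
(here `𝒜` plays the role of `𝒫` and `ℬ` the role of `𝒫'`). -/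
def Mutual [DecidableEq V] (𝒜 ℬ 𝒮 𝒮' : Finset (Finset V)) : Prop :=
  (∀ P ∈ 𝒮, (P.card : ℚ) / 2 ≤ ((P ∩ 𝒮'.biUnion id).card : ℚ)) ∧
  (∀ P ∈ 𝒜 \ 𝒮, ((P ∩ 𝒮'.biUnion id).card : ℚ) ≤ (P.card : ℚ) / 2) ∧
  (∀ P' ∈ 𝒮', (P'.card : ℚ) / 2 ≤ ((P' ∩ 𝒮.biUnion id).card : ℚ)) ∧
  (∀ P' ∈ ℬ \ 𝒮', ((P' ∩ 𝒮.biUnion id).card : ℚ) ≤ (P'.card : ℚ) / 2)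

private lemma card_symmDiff_union [DecidableEq V] (A P B : Finset V) (hd : Disjoint P A) :
    ((A ∪ P) ∆ B).card + (P ∩ B).card = (A ∆ B).card + (P \ B).card := by
  have h1 : (A ∪ P) ∆ B = (A ∆ B) ∆ P := by
    rw [← Finset.sup_eq_union, ← hd.symm.symmDiff_eq_sup, symmDiff_right_comm]
  set X := A ∆ B with hX
  have hPX : P ∩ X = P ∩ B := by
    ext x
    simp only [hX, Finset.mem_inter, Finset.mem_symmDiff]
    constructor
    · rintro ⟨hp, (⟨ha, _⟩ | ⟨hb, _⟩)⟩
      · exact absurd (hd.forall_ne_finset hp ha) (fun h => h rfl)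
      · exact ⟨hp, hb⟩
    · rintro ⟨hp, hb⟩
      exact ⟨hp, Or.inr ⟨hb, fun ha => (hd.forall_ne_finset hp ha) rfl⟩⟩
  have a : (X ∆ P).card = (X \ P).card + (P \ X).card := by
    rw [symmDiff_def, Finset.sup_eq_union]
    exact Finset.card_union_of_disjoint (disjoint_sdiff_sdiff)
  have b : (X \ P).card + (X ∩ P).card = X.card := Finset.card_sdiff_add_card_inter X P
  have c : (P \ X).card + (P ∩ X).card = P.card := Finset.card_sdiff_add_card_inter P X
  have d : (P \ B).card + (P ∩ B).card = P.card := Finset.card_sdiff_add_card_inter P B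
  have e : (X ∩ P).card = (P ∩ B).card := by rw [Finset.inter_comm, hPX]
  rw [h1]
  rw [hPX] at c
  omega

private lemma phi_insert_eq [DecidableEq V] (𝒮 ℬ' : Finset (Finset V)) (P : Finset V)
    (hdisj : ∀ Q ∈ 𝒮, Disjoint P Q) :
    phi (insert P 𝒮) ℬ' + (P ∩ ℬ'.biUnion id).card
      = phi 𝒮 ℬ' + (P \ ℬ'.biUnion id).card := by
  have hd : Disjoint P (𝒮.biUnion id) := (Finset.disjoint_biUnion_right _ _ _).mpr hdisj
  have hbu : (insert P 𝒮).biUnion id = 𝒮.biUnion id ∪ P := by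
    rw [Finset.biUnion_insert, Finset.union_comm]; rfl
  rw [phi, phi, hbu]
  exact card_symmDiff_union _ _ _ hd

private lemma phi_comm [DecidableEq V] (𝒮 𝒯 : Finset (Finset V)) : phi 𝒮 𝒯 = phi 𝒯 𝒮 := by
  rw [phi, phi, symmDiff_comm]

/-- if `(𝒮, 𝒮')` is an optimal `C_𝒫`-correspondence (i.e.
`𝒮 ∉ {∅, 𝒫}` and `φ(𝒮, 𝒮') ≤ φ(𝒯, 𝒯')` for all `𝒯 ⊆ 𝒫` with `𝒯 ∉ {∅, 𝒫}` and
all `𝒯' ⊆ 𝒫'`) which is not mutual, then `|𝒮| ∈ {1, |𝒫| − 1}` or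
`|𝒮'| ∈ {1, |𝒫'| − 1}` (here `𝒜` plays the role of `𝒫` and `ℬ` the role of `𝒫'`). -/
theorem stmt17 [DecidableEq V] [Fintype V] (𝒜 ℬ : Finset (Finset V))
    (hA : IsPartition 𝒜) (hB : IsPartition ℬ)
    (𝒮 𝒮' : Finset (Finset V)) (hS : 𝒮 ⊆ 𝒜) (hS' : 𝒮' ⊆ ℬ)
    (hne : 𝒮 ≠ ∅) (hnP : 𝒮 ≠ 𝒜)
    (hopt : ∀ 𝒯 ⊆ 𝒜, 𝒯 ≠ ∅ → 𝒯 ≠ 𝒜 → ∀ 𝒯' ⊆ ℬ, phi 𝒮 𝒮' ≤ phi 𝒯 𝒯')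
    (hnm : ¬ Mutual 𝒜 ℬ 𝒮 𝒮') :
    (𝒮.card = 1 ∨ 𝒮.card = 𝒜.card - 1) ∨
    (𝒮'.card = 1 ∨ 𝒮'.card = ℬ.card - 1) := by
  by_contra hgoal
  push_neg at hgoal
  obtain ⟨⟨h1, h2⟩, h3, h4⟩ := hgoal
  apply hnm
  have hq : ∀ (p c : ℕ), ¬ ((p:ℚ)/2 ≤ (c:ℚ)) → 2 * c < p := by
    intro p c h
    push_neg at h
    have h2 : (2 * c : ℚ) < p := by linarith
    exact_mod_cast h2
  have hq' : ∀ (p c : ℕ), ¬ ((c:ℚ) ≤ (p:ℚ)/2) → p < 2 * c := by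
    intro p c h
    push_neg at h
    have h2 : (p:ℚ) < 2 * c := by linarith
    exact_mod_cast h2
  refine ⟨?_, ?_, ?_, ?_⟩
  · intro P hP
    by_contra hlt
    have hn := hq _ _ hlt
    have hdisj : ∀ Q ∈ 𝒮.erase P, Disjoint P Q := fun Q hQ =>
      hA.2.1 P (hS hP) Q (hS (Finset.mem_of_mem_erase hQ))
        (Ne.symm (Finset.ne_of_mem_erase hQ))
    have heq := phi_insert_eq (𝒮.erase P) 𝒮' P hdisj
    rw [Finset.insert_erase hP] at heq
    have hd2 := Finset.card_sdiff_add_card_inter P (𝒮'.biUnion id)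
    have hlt2 : phi (𝒮.erase P) 𝒮' < phi 𝒮 𝒮' := by omega
    rcases eq_or_ne (𝒮.erase P) ∅ with h0 | h0
    · apply h1
      have := Finset.card_erase_add_one hP
      rw [h0] at this
      simpa using this.symm
    · have hA0 : 𝒮.erase P ≠ 𝒜 := fun h => (Finset.notMem_erase P 𝒮) (h ▸ hS hP)
      exact absurd (hopt _ ((Finset.erase_subset _ _).trans hS) h0 hA0 𝒮' hS')
        (not_le.mpr hlt2)
  · intro P hP
    obtain ⟨hPA, hPS⟩ := Finset.mem_sdiff.mp hP
    by_contra hlt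
    have hn := hq' _ _ hlt
    have hdisj : ∀ Q ∈ 𝒮, Disjoint P Q := fun Q hQ =>
      hA.2.1 P hPA Q (hS hQ) (fun h => hPS (h ▸ hQ))
    have heq := phi_insert_eq 𝒮 𝒮' P hdisj
    have hd2 := Finset.card_sdiff_add_card_inter P (𝒮'.biUnion id)
    have hlt2 : phi (insert P 𝒮) 𝒮' < phi 𝒮 𝒮' := by omega
    rcases eq_or_ne (insert P 𝒮) 𝒜 with h0 | h0
    · apply h2
      have hc : (insert P 𝒮).card = 𝒮.card + 1 := Finset.card_insert_of_notMem hPS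
      rw [h0] at hc
      omega
    · exact absurd (hopt _ (Finset.insert_subset hPA hS) (Finset.insert_ne_empty _ _)
        h0 𝒮' hS') (not_le.mpr hlt2)
  · intro P' hP'
    by_contra hlt
    have hn := hq _ _ hlt
    have hdisj : ∀ Q ∈ 𝒮'.erase P', Disjoint P' Q := fun Q hQ =>
      hB.2.1 P' (hS' hP') Q (hS' (Finset.mem_of_mem_erase hQ))
        (Ne.symm (Finset.ne_of_mem_erase hQ))
    have heq := phi_insert_eq (𝒮'.erase P') 𝒮 P' hdisj
    rw [Finset.insert_erase hP', phi_comm 𝒮' 𝒮, phi_comm (𝒮'.erase P') 𝒮] at heq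
    have hd2 := Finset.card_sdiff_add_card_inter P' (𝒮.biUnion id)
    have hlt2 : phi 𝒮 (𝒮'.erase P') < phi 𝒮 𝒮' := by omega
    exact absurd (hopt 𝒮 hS hne hnP _ ((Finset.erase_subset _ _).trans hS'))
      (not_le.mpr hlt2)
  · intro P' hP'
    obtain ⟨hPB, hPS⟩ := Finset.mem_sdiff.mp hP'
    by_contra hlt
    have hn := hq' _ _ hlt
    have hdisj : ∀ Q ∈ 𝒮', Disjoint P' Q := fun Q hQ =>
      hB.2.1 P' hPB Q (hS' hQ) (fun h => hPS (h ▸ hQ))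
    have heq := phi_insert_eq 𝒮' 𝒮 P' hdisj
    rw [phi_comm 𝒮' 𝒮, phi_comm (insert P' 𝒮') 𝒮] at heq
    have hd2 := Finset.card_sdiff_add_card_inter P' (𝒮.biUnion id)
    have hlt2 : phi 𝒮 (insert P' 𝒮') < phi 𝒮 𝒮' := by omega
    exact absurd (hopt 𝒮 hS hne hnP _ (Finset.insert_subset hPB hS'))
      (not_le.mpr hlt2)
end
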